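/- Let χ : {1,…,n} → {ℓ,c,r} with χ⁻¹(c) ∩ {2,…,n−1} = {l₁ < ⋯ < l_m}, l₀ = 1, l_{m+1} = n. Let π = {V₁,…,V_t} ∈ IBNC(χ) and σ ∈ IBNC(χ) with σ ≤ π. Then for each block V_s, μ_{IBNC(χ|_{V_s})}(σ|_{V_s}, 1_{V_s}) = ∏_{i=1}^{m+1} μ_{IBNC(χ|_{α̃_i(V_s)})}(σ|_{α̃_i(V_s)}, 1_{α̃_i(V_s)}), where α̃_i(V_s) = V_s ∩ [l_{i−1}, l_i], 1_W denotes the partition of the set W into one block, and by convention μ(∅, 1_∅) = 1. -/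

import Mathlib

namespace FFB

/-- The three letters ℓ, c, r labelling the faces. -/
inductive Letter : Type where
  | l | c | r
deriving DecidableEq

/-- `x` is one of the letters `ℓ`, `c`. -/
def isLC (x : Letter) : Prop := x = Letter.l ∨ x = Letter.c

variable {α : Type*}

/-- The total order `≺_χ` on the index set determined by `χ`:
the elements of `χ⁻¹{ℓ,c}` in increasing order followed by the elements of
`χ⁻¹{r}` in decreasing order. -/
def chiLT [LT α] (χ : α → Letter) (i j : α) : Prop :=
  (isLC (χ i) ∧ isLC (χ j) ∧ i < j)
  ∨ (isLC (χ i) ∧ χ j = Letter.r)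
  ∨ (χ i = Letter.r ∧ χ j = Letter.r ∧ j < i)

/-- A partition (equivalence relation) `π` is `χ`-noncrossing if there is no quadruple
`s₁ ≺_χ r₁ ≺_χ s₂ ≺_χ r₂` with `s₁ ∼ s₂`, `r₁ ∼ r₂` lying in different blocks. -/
def ChiNoncrossing [LT α] (χ : α → Letter) (π : Setoid α) : Prop :=
  ∀ s₁ r₁ s₂ r₂ : α, chiLT χ s₁ r₁ → chiLT χ r₁ s₂ → chiLT χ s₂ r₂ →
    π s₁ s₂ → π r₁ r₂ → π s₁ r₁

/-- A partition `π` is `χ`-interval if whenever `i < j < k`, `i ∼ k` and `χ j = c`,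
then `i, j, k` all lie in the same block. -/
def ChiInterval [LT α] (χ : α → Letter) (π : Setoid α) : Prop :=
  ∀ i j k : α, i < j → j < k → χ j = Letter.c → π i k → π i j

/-- The set of interval-bi-noncrossing partitions with respect to `χ`. -/
def IBNC [LT α] (χ : α → Letter) : Set (Setoid α) :=
  {π | ChiNoncrossing χ π ∧ ChiInterval χ π}

/-- The set of `χ`-noncrossing partitions. -/
def NC [LT α] (χ : α → Letter) : Set (Setoid α) :=
  {π | ChiNoncrossing χ π}

/-- Restriction of a partition of `α` to a subset `V ⊆ α`. -/
def restrict (V : Set α) (σ : Setoid α) : Setoid V := Setoid.comap Subtype.val σ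

/-- Restriction of `χ` to a subset `V ⊆ α`. -/
def restChi (V : Set α) (χ : α → Letter) : V → Letter := fun x => χ x.1

/- `mu` is the Möbius function of the finite poset `P` (with the induced order):
it is the (two-sided) convolution inverse of the zeta function. -/
open Classical in
def IsMobius {β : Type*} [PartialOrder β] (P : Set β) (mu : β → β → ℂ) : Prop :=
  ∀ a ∈ P, ∀ b ∈ P, a ≤ b →
    ((∑ᶠ c ∈ {c | c ∈ P ∧ a ≤ c ∧ c ≤ b}, mu a c) = if a = b then 1 else 0) ∧
    ((∑ᶠ c ∈ {c | c ∈ P ∧ a ≤ c ∧ c ≤ b}, mu c b) = if a = b then 1 else 0)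

section Moments

variable {A : Type*} [Ring A] [LinearOrder α] [Finite α]

/-- `φ_V(z₁,…,zₙ) = φ(z_{l₁} ⋯ z_{l_k})` where `V = {l₁ < ⋯ < l_k}`. -/
noncomputable def phiV (φ : A → ℂ) (z : α → A) (V : Set α) : ℂ :=
  φ (((Set.toFinite V).toFinset.sort (· ≤ ·)).map z).prod

/-- `φ_σ(z₁,…,zₙ) = ∏_{V ∈ σ} φ_V(z₁,…,zₙ)`. -/
noncomputable def phiPart (φ : A → ℂ) (z : α → A) (σ : Setoid α) : ℂ :=
  ∏ᶠ q : Quotient σ, phiV φ z {y | Quotient.mk σ y = q}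

/-- The free-free-Boolean cumulant
`κ_{χ,π}(z₁,…,zₙ) = Σ_{σ ∈ IBNC(χ), σ ≤ π} μ_{IBNC(χ)}(σ,π) φ_σ(z₁,…,zₙ)`,
where `mu` is (a function which is) the Möbius function of `IBNC(χ)`. -/
noncomputable def cum (φ : A → ℂ) (χ : α → Letter)
    (mu : Setoid α → Setoid α → ℂ) (z : α → A) (π : Setoid α) : ℂ :=
  ∑ᶠ σ ∈ {σ | σ ∈ IBNC χ ∧ σ ≤ π}, mu σ π * phiPart φ z σ

end Moments

/-- Combinatorial free-free-Boolean independence: mixed cumulants vanish.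
`F i x` is the face of the `i`-th triple labelled by the letter `x`. -/
def CombFFB {A : Type*} [Ring A] [Algebra ℂ A] (φ : A →ₗ[ℂ] ℂ) {I : Type*}
    (F : I → Letter → NonUnitalSubalgebra ℂ A) : Prop :=
  ∀ (n : ℕ) (χ : Fin n → Letter) (ω : Fin n → I) (z : Fin n → A),
    (∀ k, z k ∈ F (ω k) (χ k)) → (¬ ∃ i, ∀ k, ω k = i) →
    ∀ mu : Setoid (Fin n) → Setoid (Fin n) → ℂ, IsMobius (IBNC χ) mu →
      cum (⇑φ) χ mu z ⊤ = 0

end FFB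

namespace FFB

instance {β : Type*} [Finite β] : Finite (Setoid β) :=
  Finite.of_injective (fun s : Setoid β => (s.r : β → β → Prop)) (fun a b h => by
    cases a; cases b; congr)

open Classical in
lemma key {β : Type*} [PartialOrder β] [OrderTop β] [Finite β]
    {ι : Type*} [Fintype ι] [DecidableEq ι]
    {γ : ι → Type*} [∀ i, PartialOrder (γ i)] [∀ i, OrderTop (γ i)] [∀ i, Finite (γ i)]
    (P : Set β) (Q : ∀ i, Set (γ i)) (f : ∀ i, β → γ i)
    (mu : β → β → ℂ) (nu : ∀ i, γ i → γ i → ℂ)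
    (hmu : IsMobius P mu) (hnu : ∀ i, IsMobius (Q i) (nu i))
    (htopP : ⊤ ∈ P) (htopQ : ∀ i, ⊤ ∈ Q i) (hftop : ∀ i, f i (⊤ : β) = ⊤)
    (hmem : ∀ a ∈ P, ∀ i, f i a ∈ Q i)
    (hmono : ∀ a ∈ P, ∀ b ∈ P, (a ≤ b ↔ ∀ i, f i a ≤ f i b))
    (hsurj : ∀ a ∈ P, ∀ d : ∀ i, γ i, (∀ i, d i ∈ Q i ∧ f i a ≤ d i) →
       ∃ c ∈ P, a ≤ c ∧ ∀ i, f i c = d i) :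
    ∀ a ∈ P, mu a ⊤ = ∏ i, nu i (f i a) ⊤ := by
  have wf := (Finite.to_wellFoundedGT (α := β)).wf
  intro a
  induction a using wf.induction with
  | _ a IH =>
  intro ha
  set g : β → ℂ := fun c => ∏ i, nu i (f i c) ⊤ with hg
  have hS := (hmu a ha ⊤ htopP le_top).2
  set S : Set β := {c | c ∈ P ∧ a ≤ c ∧ c ≤ ⊤} with hSdef
  set sF : Finset β := (Set.toFinite S).toFinset with hsF
  have hScoe : S = ↑sF := by simp [hsF]
  have hS' : ∑ c ∈ sF, mu c ⊤ = if a = ⊤ then 1 else 0 := by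
    rw [← finsum_mem_coe_finset, ← hScoe]; exact hS
  have haS : a ∈ sF := by
    rw [Set.Finite.mem_toFinset]; exact ⟨ha, le_refl a, le_top⟩
  -- erase decomposition
  have hsplit : mu a ⊤ + ∑ c ∈ sF.erase a, mu c ⊤ = ∑ c ∈ sF, mu c ⊤ :=
    Finset.add_sum_erase _ (fun c => mu c ⊤) haS
  have hsplitg : g a + ∑ c ∈ sF.erase a, g c = ∑ c ∈ sF, g c :=
    Finset.add_sum_erase _ g haS
  have hIH : ∀ c ∈ sF.erase a, mu c ⊤ = g c := by
    intro c hc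
    have hcne : c ≠ a := (Finset.mem_erase.mp hc).1
    have hcS : c ∈ S := by
      have := (Finset.mem_erase.mp hc).2; rwa [Set.Finite.mem_toFinset] at this
    exact IH c (lt_of_le_of_ne hcS.2.1 (Ne.symm hcne)) hcS.1
  -- the product sets
  set t : ∀ i, Finset (γ i) :=
    fun i => (Set.toFinite {y | y ∈ Q i ∧ f i a ≤ y ∧ y ≤ ⊤}).toFinset with ht
  have hbij : ∑ c ∈ sF, g c = ∑ d ∈ Fintype.piFinset t, ∏ i, nu i (d i) ⊤ := by
    refine Finset.sum_bij (fun c _ => fun i => f i c) ?_ ?_ ?_ ?_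
    · intro c hc
      rw [Set.Finite.mem_toFinset] at hc
      rw [Fintype.mem_piFinset]
      intro i
      rw [Set.Finite.mem_toFinset]
      exact ⟨hmem c hc.1 i, (hmono a ha c hc.1).mp hc.2.1 i, le_top⟩
    · intro c₁ h₁ c₂ h₂ he
      rw [Set.Finite.mem_toFinset] at h₁ h₂
      have h12 : c₁ ≤ c₂ := (hmono c₁ h₁.1 c₂ h₂.1).mpr (fun i => le_of_eq (congrFun he i))
      have h21 : c₂ ≤ c₁ := (hmono c₂ h₂.1 c₁ h₁.1).mpr (fun i => le_of_eq (congrFun he i).symm)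
      exact le_antisymm h12 h21
    · intro d hd
      rw [Fintype.mem_piFinset] at hd
      have hd' : ∀ i, d i ∈ Q i ∧ f i a ≤ d i := by
        intro i; have := hd i; rw [Set.Finite.mem_toFinset] at this; exact ⟨this.1, this.2.1⟩
      obtain ⟨c, hcP, hac, hfc⟩ := hsurj a ha d hd'
      refine ⟨c, ?_, funext hfc⟩
      rw [Set.Finite.mem_toFinset]; exact ⟨hcP, hac, le_top⟩
    · intro c hc; rfl
  have hprod : ∑ d ∈ Fintype.piFinset t, ∏ i, nu i (d i) ⊤
      = ∏ i, if f i a = ⊤ then (1 : ℂ) else 0 := by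
    rw [← Finset.prod_univ_sum t (fun i y => nu i y ⊤)]
    refine Finset.prod_congr rfl ?_
    intro i _
    have := (hnu i (f i a) (hmem a ha i) ⊤ (htopQ i) le_top).2
    rw [← this, ← finsum_mem_coe_finset, Set.Finite.coe_toFinset]
  have hite : (if a = ⊤ then (1:ℂ) else 0) = ∏ i, if f i a = ⊤ then (1 : ℂ) else 0 := by
    by_cases h : a = ⊤
    · subst h
      rw [if_pos rfl]
      rw [Finset.prod_congr rfl (fun i _ => if_pos (hftop i)), Finset.prod_const_one]
    · rw [if_neg h]
      have : ∃ i, f i a ≠ ⊤ := by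
        by_contra hcon
        push_neg at hcon
        exact h (le_antisymm le_top ((hmono ⊤ htopP a ha).mpr
          (fun i => by rw [hftop i, hcon i])))
      obtain ⟨i, hi⟩ := this
      exact (Finset.prod_eq_zero (Finset.mem_univ i) (show (if f i a = ⊤ then (1:ℂ) else 0) = 0 from if_neg hi)).symm
  have : mu a ⊤ = g a := by
    have e1 : mu a ⊤ = (if a = ⊤ then (1:ℂ) else 0) - ∑ c ∈ sF.erase a, mu c ⊤ := by
      exact eq_sub_of_add_eq (hsplit.trans hS')
    rw [e1, Finset.sum_congr rfl hIH, hite, ← hprod, ← hbij, ← hsplitg]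
    ring
  exact this

-- ====== auxiliary lemmas ======

lemma not_isLC_of_r {a : Letter} (h : a = Letter.r) : ¬ isLC a := by
  subst h; rintro (h|h) <;> exact Letter.noConfusion h

lemma isLC_or_r (a : Letter) : isLC a ∨ a = Letter.r := by
  cases a
  · exact Or.inl (Or.inl rfl)
  · exact Or.inl (Or.inr rfl)
  · exact Or.inr rfl

lemma chiLT_trichot {A : Type*} [LinearOrder A] (χ : A → Letter) (x y : A) :
    chiLT χ x y ∨ x = y ∨ chiLT χ y x := by
  rcases eq_or_ne x y with h | h
  · exact Or.inr (Or.inl h)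
  rcases isLC_or_r (χ x) with hx | hx <;> rcases isLC_or_r (χ y) with hy | hy
  · rcases lt_or_gt_of_ne h with hlt | hlt
    · exact Or.inl (Or.inl ⟨hx, hy, hlt⟩)
    · exact Or.inr (Or.inr (Or.inl ⟨hy, hx, hlt⟩))
  · exact Or.inl (Or.inr (Or.inl ⟨hx, hy⟩))
  · exact Or.inr (Or.inr (Or.inr (Or.inl ⟨hy, hx⟩)))
  · rcases lt_or_gt_of_ne h with hlt | hlt
    · exact Or.inr (Or.inr (Or.inr (Or.inr ⟨hy, hx, hlt⟩)))
    · exact Or.inl (Or.inr (Or.inr ⟨hx, hy, hlt⟩))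

lemma chiLT_irrefl {A : Type*} [LinearOrder A] (χ : A → Letter) (x : A) :
    ¬ chiLT χ x x := by
  rintro (⟨_, _, h⟩ | ⟨h1, h2⟩ | ⟨_, _, h⟩)
  · exact lt_irrefl _ h
  · exact not_isLC_of_r h2 h1
  · exact lt_irrefl _ h

lemma chiLT_trans {A : Type*} [LinearOrder A] (χ : A → Letter) {x y z : A}
    (h1 : chiLT χ x y) (h2 : chiLT χ y z) : chiLT χ x z := by
  rcases h1 with ⟨hx, hy, hxy⟩ | ⟨hx, hy⟩ | ⟨hx, hy, hxy⟩ <;>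
    rcases h2 with ⟨hy', hz', hyz⟩ | ⟨hy', hz'⟩ | ⟨hy', hz', hyz⟩
  · exact Or.inl ⟨hx, hz', lt_trans hxy hyz⟩
  · exact Or.inr (Or.inl ⟨hx, hz'⟩)
  · exact absurd hy (not_isLC_of_r hy')
  · exact absurd hy' (not_isLC_of_r hy)
  · exact absurd hy' (not_isLC_of_r hy)
  · exact Or.inr (Or.inl ⟨hx, hz'⟩)
  · exact absurd hy' (not_isLC_of_r hy)
  · exact absurd hy' (not_isLC_of_r hy)
  · exact Or.inr (Or.inr ⟨hx, hz', lt_trans hyz hxy⟩)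

/-- comap along a strictly monotone map preserves IBNC. -/
lemma comap_mem_IBNC {A B : Type*} [LT A] [LT B] (e : A → B) (χB : B → Letter)
    (hlt : ∀ x y : A, x < y ↔ e x < e y) {σ : Setoid B} (h : σ ∈ IBNC χB) :
    Setoid.comap e σ ∈ IBNC (fun a => χB (e a)) := by
  constructor
  · intro s₁ r₁ s₂ r₂ o1 o2 o3 hs hr
    have tr : ∀ x y : A, chiLT (fun a => χB (e a)) x y → chiLT χB (e x) (e y) := by
      rintro x y (⟨h1, h2, h3⟩ | ⟨h1, h2⟩ | ⟨h1, h2, h3⟩)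
      · exact Or.inl ⟨h1, h2, (hlt x y).mp h3⟩
      · exact Or.inr (Or.inl ⟨h1, h2⟩)
      · exact Or.inr (Or.inr ⟨h1, h2, (hlt y x).mp h3⟩)
    exact h.1 (e s₁) (e r₁) (e s₂) (e r₂) (tr _ _ o1) (tr _ _ o2) (tr _ _ o3) hs hr
  · intro i j k hij hjk hχ hik
    exact h.2 (e i) (e j) (e k) ((hlt i j).mp hij) ((hlt j k).mp hjk) hχ hik

lemma top_mem_IBNC {A : Type*} [LT A] (χ : A → Letter) : (⊤ : Setoid A) ∈ IBNC χ :=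
  ⟨fun _ _ _ _ _ _ _ _ _ => trivial, fun _ _ _ _ _ _ _ => trivial⟩

-- ====== chains ======

def ChainN {T : Type*} (R : T → T → Prop) : ℕ → T → T → Prop
  | 0, a, b => a = b
  | (k+1), a, b => ∃ x, R a x ∧ ChainN R k x b

lemma chainN_zero {T : Type*} {R : T → T → Prop} {a b : T} : ChainN R 0 a b ↔ a = b := Iff.rfl

lemma chainN_succ {T : Type*} {R : T → T → Prop} {k : ℕ} {a b : T} :
    ChainN R (k+1) a b ↔ ∃ x, R a x ∧ ChainN R k x b := Iff.rfl

lemma chainN_trans {T : Type*} {R : T → T → Prop} :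
    ∀ {k k' : ℕ} {a b c : T}, ChainN R k a b → ChainN R k' b c → ChainN R (k + k') a c := by
  intro k
  induction k with
  | zero => intro k' a b c h h'; cases h; simpa using h'
  | succ k IH =>
    intro k' a b c h h'
    obtain ⟨x, hax, hx⟩ := h
    rw [Nat.succ_add]
    exact chainN_succ.mpr ⟨x, hax, IH hx h'⟩

lemma chainN_symm {T : Type*} {R : T → T → Prop} (hR : ∀ {x y}, R x y → R y x) :
    ∀ {k : ℕ} {a b : T}, ChainN R k a b → ChainN R k b a := by
  intro k
  induction k with
  | zero => intro a b h; exact h.symm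
  | succ k IH =>
    intro a b h
    obtain ⟨x, hax, hx⟩ := h
    have : ChainN R (k + 1) b a := chainN_trans (IH hx) ⟨a, hR hax, rfl⟩
    simpa [Nat.add_comm] using this

/-- The setoid generated by a symmetric relation, via chains. -/
def chainSetoid {T : Type*} (R : T → T → Prop) (hR : ∀ {x y}, R x y → R y x) : Setoid T where
  r a b := ∃ k, ChainN R k a b
  iseqv := by
    constructor
    · exact fun a => ⟨0, rfl⟩
    · rintro a b ⟨k, h⟩; exact ⟨k, chainN_symm hR h⟩
    · rintro a b c ⟨k, h⟩ ⟨k', h'⟩; exact ⟨k + k', chainN_trans h h'⟩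

-- ====== the gluing lemma for noncrossing ======

lemma glue_nc {T : Type*} (lt : T → T → Prop)
    (ltt : ∀ {x y z}, lt x y → lt y z → lt x z)
    (lttr : ∀ x y : T, lt x y ∨ x = y ∨ lt y x)
    (ltir : ∀ x : T, ¬ lt x x)
    (e : Setoid T) (W A H : Set T)
    (hcov : ∀ x ∈ W, x ∈ A ∨ x ∈ H)
    (hconv : ∀ x y z, x ∈ H → z ∈ H → y ∈ W → lt x y → lt y z → y ∈ H)
    (hmin : ∀ u, u ∈ A → u ∈ H → ∀ h ∈ H, u = h ∨ lt u h)
    (hsub : ∀ u v, u ∈ A → u ∈ H → v ∈ A → v ∈ H → u = v)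
    (hsplit : ∀ a b, a ∈ A → b ∈ H → e a b → ∃ u, u ∈ A ∧ u ∈ H ∧ e a u)
    (NCA : ∀ s₁ r₁ s₂ r₂, s₁ ∈ A → r₁ ∈ A → s₂ ∈ A → r₂ ∈ A →
      lt s₁ r₁ → lt r₁ s₂ → lt s₂ r₂ → e s₁ s₂ → e r₁ r₂ → e s₁ r₁)
    (NCH : ∀ s₁ r₁ s₂ r₂, s₁ ∈ H → r₁ ∈ H → s₂ ∈ H → r₂ ∈ H →
      lt s₁ r₁ → lt r₁ s₂ → lt s₂ r₂ → e s₁ s₂ → e r₁ r₂ → e s₁ r₁) :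
    ∀ s₁ r₁ s₂ r₂, s₁ ∈ W → r₁ ∈ W → s₂ ∈ W → r₂ ∈ W →
      lt s₁ r₁ → lt r₁ s₂ → lt s₂ r₂ → e s₁ s₂ → e r₁ r₂ → e s₁ r₁ := by
  intro s₁ r₁ s₂ r₂ hs₁ hr₁ hs₂ hr₂ o1 o2 o3 es er
  have classify : ∀ x y, x ∈ W → y ∈ W → e x y →
      (x ∈ A ∧ y ∈ A) ∨ (x ∈ H ∧ y ∈ H) ∨ ∃ u, u ∈ A ∧ u ∈ H ∧ e x u := by
    intro x y hx hy hxy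
    rcases hcov x hx with hxA | hxH <;> rcases hcov y hy with hyA | hyH
    · exact Or.inl ⟨hxA, hyA⟩
    · obtain ⟨u, h1, h2, h3⟩ := hsplit x y hxA hyH hxy
      exact Or.inr (Or.inr ⟨u, h1, h2, h3⟩)
    · obtain ⟨u, h1, h2, h3⟩ := hsplit y x hyA hxH (e.symm hxy)
      exact Or.inr (Or.inr ⟨u, h1, h2, e.trans hxy h3⟩)
    · exact Or.inr (Or.inl ⟨hxH, hyH⟩)
  rcases classify s₁ s₂ hs₁ hs₂ es with ⟨sA1, sA2⟩ | ⟨sH1, sH2⟩ | ⟨u, uA, uH, esu⟩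
  · -- s-pair both in A
    rcases hcov r₁ hr₁ with rA1 | rH1
    · rcases hcov r₂ hr₂ with rA2 | rH2
      · exact NCA s₁ r₁ s₂ r₂ sA1 rA1 sA2 rA2 o1 o2 o3 es er
      · -- r₁ ∈ A, r₂ ∈ H
        obtain ⟨u, uA, uH, eru⟩ := hsplit r₁ r₂ rA1 rH2 er
        rcases lttr s₂ u with h | h | h
        · exact NCA s₁ r₁ s₂ u sA1 rA1 sA2 uA o1 o2 h es eru
        · subst h; exact e.trans es (e.symm eru)
        · have : s₂ ∈ H := hconv u s₂ r₂ uH rH2 hs₂ h o3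
          have := hsub s₂ u sA2 this uA uH
          subst this; exact absurd h (ltir _)
    · -- r₁ ∈ H
      rcases hcov r₂ hr₂ with rA2 | rH2
      · -- r₁ ∈ H, r₂ ∈ A
        obtain ⟨u, uA, uH, eru'⟩ := hsplit r₂ r₁ rA2 rH1 (e.symm er)
        have eru : e r₁ u := e.trans er eru'
        rcases lttr s₁ u with h | h | h
        · -- lt s₁ u ; need lt u s₂
          have husx : lt u s₂ := by
            rcases hmin u uA uH r₁ rH1 with h' | h'
            · rw [h']; exact o2
            · exact ltt h' o2
          have : e s₁ u :=
            NCA s₁ u s₂ r₂ sA1 uA sA2 rA2 h husx o3 es (e.trans (e.symm eru) er)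
          exact e.trans this (e.symm eru)
        · subst h; exact e.symm eru
        · have : s₁ ∈ H := hconv u s₁ r₁ uH rH1 hs₁ h o1
          have := hsub s₁ u sA1 this uA uH
          subst this; exact absurd h (ltir _)
      · -- r₁, r₂ ∈ H : impossible
        have hs2H : s₂ ∈ H := hconv r₁ s₂ r₂ rH1 rH2 hs₂ o2 o3
        rcases hmin s₂ sA2 hs2H r₁ rH1 with h | h
        · exact absurd (h ▸ o2) (ltir _)
        · exact absurd (ltt o2 h) (ltir _)
  · -- s-pair both in H
    have rH1 : r₁ ∈ H := hconv s₁ r₁ s₂ sH1 sH2 hr₁ o1 o2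
    rcases hcov r₂ hr₂ with rA2 | rH2
    · -- r₂ ∈ A
      obtain ⟨u, uA, uH, eru'⟩ := hsplit r₂ r₁ rA2 rH1 (e.symm er)
      have eru : e r₁ u := e.trans er eru'
      rcases hmin u uA uH s₁ sH1 with h | h
      · subst h; exact e.symm eru
      · have : e u s₁ :=
          NCH u s₁ r₁ s₂ uH sH1 rH1 sH2 h o1 o2 (e.symm eru) es
        exact e.trans (e.symm this) (e.symm eru)
    · exact NCH s₁ r₁ s₂ r₂ sH1 rH1 sH2 rH2 o1 o2 o3 es er
  · -- s-class meets the junction u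
    rcases hcov r₁ hr₁ with rA1 | rH1
    · rcases hcov r₂ hr₂ with rA2 | rH2
      · -- r₁, r₂ ∈ A
        rcases hcov s₁ hs₁ with sA1 | sH1
        · rcases hcov s₂ hs₂ with sA2 | sH2
          · exact NCA s₁ r₁ s₂ r₂ sA1 rA1 sA2 rA2 o1 o2 o3 es er
          · have hur2 : lt u r₂ := by
              rcases hmin u uA uH s₂ sH2 with h | h
              · rw [h]; exact o3
              · exact ltt h o3
            rcases lttr r₁ u with h | h | h
            · exact NCA s₁ r₁ u r₂ sA1 rA1 uA rA2 o1 h hur2 esu er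
            · subst h; exact esu
            · have rH1 : r₁ ∈ H := hconv u r₁ s₂ uH sH2 hr₁ h o2
              have := hsub r₁ u rA1 rH1 uA uH
              subst this; exact absurd h (ltir _)
        · rcases hmin u uA uH s₁ sH1 with h | h
          · subst h
            rcases hcov s₂ hs₂ with sA2 | sH2
            · exact NCA u r₁ s₂ r₂ uA rA1 sA2 rA2 o1 o2 o3 es er
            · have rH1 : r₁ ∈ H := hconv u r₁ s₂ uH sH2 hr₁ o1 o2
              have := hsub r₁ u rA1 rH1 uA uH
              subst this; exact absurd o1 (ltir _)
          · rcases hcov s₂ hs₂ with sA2 | sH2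
            · have : e u r₁ :=
                NCA u r₁ s₂ r₂ uA rA1 sA2 rA2 (ltt h o1) o2 o3 (e.trans (e.symm esu) es) er
              exact e.trans esu this
            · have rH1 : r₁ ∈ H := hconv s₁ r₁ s₂ sH1 sH2 hr₁ o1 o2
              have := hsub r₁ u rA1 rH1 uA uH
              subst this
              exact absurd (ltt h o1) (ltir _)
      · -- r₁ ∈ A, r₂ ∈ H
        obtain ⟨u', u'A, u'H, eru'⟩ := hsplit r₁ r₂ rA1 rH2 er
        have : u' = u := hsub u' u u'A u'H uA uH
        subst this
        exact e.trans esu (e.symm eru')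
    · rcases hcov r₂ hr₂ with rA2 | rH2
      · -- r₁ ∈ H, r₂ ∈ A
        obtain ⟨u', u'A, u'H, eru'⟩ := hsplit r₂ r₁ rA2 rH1 (e.symm er)
        have : u' = u := hsub u' u u'A u'H uA uH
        subst this
        exact e.trans esu (e.symm (e.trans er eru'))
      · -- r₁, r₂ ∈ H
        have s2H : s₂ ∈ H := hconv r₁ s₂ r₂ rH1 rH2 hs₂ o2 o3
        rcases hcov s₁ hs₁ with sA1 | sH1
        · rcases hmin u uA uH r₁ rH1 with h | h
          · exact h ▸ esu
          · have : e u r₁ :=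
              NCH u r₁ s₂ r₂ uH rH1 s2H rH2 h o2 o3 (e.trans (e.symm esu) es) er
            exact e.trans esu this
        · exact NCH s₁ r₁ s₂ r₂ sH1 rH1 s2H rH2 o1 o2 o3 es er

-- ====== gluing of piece partitions ======

section Pieces
variable {N M : ℕ} (V : Set (Fin N)) (l : Fin (M+2) → Fin N)

def pieceSet (i : Fin (M+1)) : Set (Fin N) := V ∩ Set.Icc (l i.castSucc) (l i.succ)

variable (d : ∀ i : Fin (M+1), Setoid ↥(pieceSet V l i))

def glueRel : ↥V → ↥V → Prop := fun x y =>
  ∃ (i : Fin (M+1)) (hx : x.1 ∈ pieceSet V l i) (hy : y.1 ∈ pieceSet V l i),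
    d i ⟨x.1, hx⟩ ⟨y.1, hy⟩

lemma glueRel_symm : ∀ {x y}, glueRel V l d x y → glueRel V l d y x := by
  rintro x y ⟨i, hx, hy, h⟩
  exact ⟨i, hy, hx, (d i).symm h⟩

variable {V l d}

lemma glueRel_cut (hl : StrictMono l) (p : Fin (M+2)) :
    ∀ x y, glueRel V l d x y → (x.1 ≤ l p ∧ y.1 ≤ l p) ∨ (l p ≤ x.1 ∧ l p ≤ y.1) := by
  rintro x y ⟨i, hx, hy, -⟩
  rcases le_or_gt ((i : ℕ) + 1) (p : ℕ) with h | h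
  · left
    have h1 : l i.succ ≤ l p := hl.monotone (by rw [Fin.le_def]; simpa using h)
    exact ⟨le_trans hx.2.2 h1, le_trans hy.2.2 h1⟩
  · right
    have h1 : l p ≤ l i.castSucc := hl.monotone (by rw [Fin.le_def]; simp; omega)
    exact ⟨le_trans h1 hx.2.1, le_trans h1 hy.2.1⟩

lemma chainN_cross {R : ↥V → ↥V → Prop} (t : Fin N)
    (hcut : ∀ x y, R x y → (x.1 ≤ t ∧ y.1 ≤ t) ∨ (t ≤ x.1 ∧ t ≤ y.1)) :
    ∀ (k : ℕ) (a b : ↥V), ChainN R k a b → a.1 ≤ t → t < b.1 →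
      ∃ (ht : t ∈ V) (k₁ k₂ : ℕ), k₁ + k₂ ≤ k ∧
        ChainN R k₁ a ⟨t, ht⟩ ∧ ChainN R k₂ ⟨t, ht⟩ b := by
  intro k
  induction k with
  | zero =>
    intro a b hab ha hb
    cases hab
    exact absurd (lt_of_le_of_lt ha hb) (lt_irrefl _)
  | succ k IH =>
    intro a b hab ha hb
    obtain ⟨x, hax, hrest⟩ := hab
    rcases hcut _ _ hax with ⟨-, hx⟩ | ⟨hta, -⟩
    · obtain ⟨ht, k₁, k₂, hk, c₁, c₂⟩ := IH x b hrest hx hb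
      exact ⟨ht, k₁ + 1, k₂, by omega, chainN_succ.mpr ⟨x, hax, c₁⟩, c₂⟩
    · have hat : a.1 = t := le_antisymm ha hta
      have htV : t ∈ V := hat ▸ a.2
      have hae : a = (⟨t, htV⟩ : ↥V) := Subtype.ext hat
      exact ⟨htV, 0, k + 1, by omega, chainN_zero.mpr hae,
        hae ▸ chainN_succ.mpr ⟨x, hax, hrest⟩⟩

lemma chainN_squeeze (hl : StrictMono l) :
    ∀ (k : ℕ) (i : Fin (M+1)) (a b : ↥V) (ha : a.1 ∈ pieceSet V l i)
      (hb : b.1 ∈ pieceSet V l i), ChainN (glueRel V l d) k a b →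
      d i ⟨a.1, ha⟩ ⟨b.1, hb⟩ := by
  intro k
  induction k using Nat.strong_induction_on with
  | _ k IH =>
  intro i a b ha hb hch
  match k, hch with
  | 0, hch =>
    cases hch
    exact Setoid.refl _
  | (k+1), hch =>
    obtain ⟨x, hax, hrest⟩ := hch
    by_cases hxi : x.1 ∈ pieceSet V l i
    · have hdix : d i ⟨a.1, ha⟩ ⟨x.1, hxi⟩ := by
        obtain ⟨j, haj, hxj, hd⟩ := hax
        by_cases hji : j = i
        · subst hji; exact hd
        · -- the two pieces overlap in at most a point
          have hax_eq : a.1 = x.1 := by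
            rcases lt_or_gt_of_ne (fun h : (j:ℕ) = (i:ℕ) => hji (Fin.ext h)) with h | h
            · -- j < i : both a,x in [l i.castSucc, l j.succ], and l j.succ ≤ l i.castSucc
              have h1 : l j.succ ≤ l i.castSucc := hl.monotone (by rw [Fin.le_def]; simp; omega)
              have e1 : a.1 = l i.castSucc :=
                le_antisymm (le_trans haj.2.2 h1) ha.2.1
              have e2 : x.1 = l i.castSucc :=
                le_antisymm (le_trans hxj.2.2 h1) hxi.2.1
              rw [e1, e2]
            · have h1 : l i.succ ≤ l j.castSucc := hl.monotone (by rw [Fin.le_def]; simp; omega)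
              have e1 : a.1 = l i.succ := le_antisymm ha.2.2 (le_trans h1 haj.2.1)
              have e2 : x.1 = l i.succ := le_antisymm hxi.2.2 (le_trans h1 hxj.2.1)
              rw [e1, e2]
          have : (⟨a.1, ha⟩ : ↥(pieceSet V l i)) = ⟨x.1, hxi⟩ := Subtype.ext hax_eq
          rw [this]
      exact (d i).trans hdix (IH k (by omega) i x b hxi hb hrest)
    · have hxV : x.1 ∈ V := x.2
      have hnIcc : ¬ (l i.castSucc ≤ x.1 ∧ x.1 ≤ l i.succ) := fun h => hxi ⟨hxV, h⟩
      rcases not_and_or.mp hnIcc with hlow | hhigh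
      · -- x.1 < l i.castSucc ; a is pinned at l i.castSucc
        have hlow' : x.1 < l i.castSucc := not_le.mp hlow
        obtain ⟨j, haj, hxj, -⟩ := hax
        have hji : (j:ℕ) < (i:ℕ) := by
          have : l j.castSucc < l i.castSucc := lt_of_le_of_lt hxj.2.1 hlow'
          have h2 := Fin.lt_def.mp (hl.lt_iff_lt.mp this)
          simp only [Fin.coe_castSucc] at h2
          exact h2
        have h1 : l j.succ ≤ l i.castSucc := hl.monotone (by rw [Fin.le_def]; simp; omega)
        have hat : a.1 = l i.castSucc := le_antisymm (le_trans haj.2.2 h1) ha.2.1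
        by_cases hbt : b.1 = l i.castSucc
        · have : (⟨a.1, ha⟩ : ↥(pieceSet V l i)) = ⟨b.1, hb⟩ :=
            Subtype.ext (by rw [hat, hbt])
          rw [this]
        · have hblt : l i.castSucc < b.1 := lt_of_le_of_ne hb.2.1 (Ne.symm hbt)
          obtain ⟨ht, k₁, k₂, hk, c₁, c₂⟩ :=
            chainN_cross (R := glueRel V l d) (l i.castSucc)
              (fun x y h => glueRel_cut hl i.castSucc x y h) k x b hrest
              (le_of_lt hlow') hblt
          have hae : (⟨l i.castSucc, ht⟩ : ↥V) = a := Subtype.ext hat.symm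
          exact IH k₂ (by omega) i a b ha hb (hae ▸ c₂)
      · -- l i.succ < x.1 ; a is pinned at l i.succ
        have hhigh' : l i.succ < x.1 := not_le.mp hhigh
        obtain ⟨j, haj, hxj, -⟩ := hax
        have hji : (i:ℕ) < (j:ℕ) := by
          have : l i.succ < l j.succ := lt_of_lt_of_le hhigh' hxj.2.2
          have h2 := Fin.lt_def.mp (hl.lt_iff_lt.mp this)
          simp only [Fin.val_succ] at h2
          omega
        have h1 : l i.succ ≤ l j.castSucc := hl.monotone (by rw [Fin.le_def]; simp; omega)
        have hat : a.1 = l i.succ := le_antisymm ha.2.2 (le_trans h1 haj.2.1)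
        have hrev : ChainN (glueRel V l d) k b x :=
          chainN_symm (fun h => glueRel_symm V l d h) hrest
        obtain ⟨ht, k₁, k₂, hk, c₁, c₂⟩ :=
          chainN_cross (R := glueRel V l d) (l i.succ)
            (fun x y h => glueRel_cut hl i.succ x y h) k b x hrev hb.2.2 hhigh'
        have hae : (⟨l i.succ, ht⟩ : ↥V) = a := Subtype.ext hat.symm
        have : ChainN (glueRel V l d) k₁ a b :=
          hae ▸ chainN_symm (fun h => glueRel_symm V l d h) c₁
        exact IH k₁ (by omega) i a b ha hb this

variable (V l d) in
def glueSetoid : Setoid ↥V := chainSetoid (glueRel V l d) (fun h => glueRel_symm V l d h)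

lemma glueSetoid_of_rel {x y : ↥V} (h : glueRel V l d x y) : glueSetoid V l d x y :=
  ⟨1, chainN_succ.mpr ⟨y, h, rfl⟩⟩

lemma glueSetoid_squeeze (hl : StrictMono l) {i : Fin (M+1)} {a b : ↥V}
    (ha : a.1 ∈ pieceSet V l i) (hb : b.1 ∈ pieceSet V l i)
    (h : glueSetoid V l d a b) : d i ⟨a.1, ha⟩ ⟨b.1, hb⟩ := by
  obtain ⟨k, hk⟩ := h
  exact chainN_squeeze hl k i a b ha hb hk

lemma glueSetoid_cross (hl : StrictMono l) (t : Fin N) (ht : ∃ p : Fin (M+2), t = l p)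
    {a b : ↥V} (h : glueSetoid V l d a b) (h1 : a.1 ≤ t) (h2 : t < b.1) :
    ∃ (htV : t ∈ V), glueSetoid V l d a ⟨t, htV⟩ ∧ glueSetoid V l d ⟨t, htV⟩ b := by
  obtain ⟨k, hk⟩ := h
  obtain ⟨p, rfl⟩ := ht
  obtain ⟨htV, k₁, k₂, -, c₁, c₂⟩ :=
    chainN_cross (R := glueRel V l d) (l p) (fun x y h => glueRel_cut hl p x y h) k a b hk h1 h2
  exact ⟨htV, ⟨k₁, c₁⟩, ⟨k₂, c₂⟩⟩

end Pieces


/-- With `χ⁻¹(c) ∩ {2,…,n−1} = {l₁ < ⋯ < l_m}`, `l₀ = 1`, `l_{m+1} = n`,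
let `π, σ ∈ IBNC(χ)` with `σ ≤ π` and let `V` be a block of `π` (the block of the point
`x`).  Then `μ_{IBNC(χ|_V)}(σ|_V, 1_V) = ∏_{i=1}^{m+1} μ_{IBNC(χ|_{α̃ᵢ(V)})}(σ|_{α̃ᵢ(V)},
1_{α̃ᵢ(V)})`, where `α̃ᵢ(V) = V ∩ [l_{i-1}, l_i]` and `1_W = ⊤` is the one-block partition
of `W` (with the convention `μ(∅,1_∅) = 1`, which is automatic here). -/
theorem mobius_block_eq_prod_over_intervals (n m : ℕ) (χ : Fin n → Letter)
    (l : Fin (m + 2) → Fin n) (hmono : StrictMono l)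
    (hl0 : (l 0 : ℕ) = 0) (hlast : (l (Fin.last (m + 1)) : ℕ) + 1 = n)
    (hc : ∀ j : Fin n, (χ j = Letter.c ∧ 0 < (j : ℕ) ∧ (j : ℕ) + 2 ≤ n) ↔
      ∃ i : Fin (m + 2), 0 < (i : ℕ) ∧ (i : ℕ) < m + 1 ∧ j = l i)
    (π : Setoid (Fin n)) (hπ : π ∈ IBNC χ)
    (σ : Setoid (Fin n)) (hσ : σ ∈ IBNC χ) (hle : σ ≤ π)
    (x : Fin n)
    (muV : Setoid ({y | π x y} : Set (Fin n)) → Setoid ({y | π x y} : Set (Fin n)) → ℂ)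
    (hmuV : IsMobius (IBNC (restChi {y | π x y} χ)) muV)
    (mui : ∀ i : Fin (m + 1),
      Setoid (({y | π x y} ∩ Set.Icc (l i.castSucc) (l i.succ) : Set (Fin n))) →
      Setoid (({y | π x y} ∩ Set.Icc (l i.castSucc) (l i.succ) : Set (Fin n))) → ℂ)
    (hmui : ∀ i : Fin (m + 1),
      IsMobius (IBNC (restChi ({y | π x y} ∩ Set.Icc (l i.castSucc) (l i.succ)) χ)) (mui i)) :
    muV (restrict {y | π x y} σ) ⊤ =
      ∏ i : Fin (m + 1),
        mui i (restrict ({y | π x y} ∩ Set.Icc (l i.castSucc) (l i.succ)) σ) ⊤ := by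
  classical
  let V : Set (Fin n) := {y | π x y}
  have hχl : ∀ p : Fin (m+2), 0 < (p:ℕ) → (p:ℕ) < m+1 → χ (l p) = Letter.c :=
    fun p h1 h2 => ((hc (l p)).mpr ⟨p, h1, h2, rfl⟩).1
  have hl0' : ∀ a : Fin n, l 0 ≤ a := fun a => by
    rw [Fin.le_def, hl0]; exact Nat.zero_le _
  have hlast' : ∀ a : Fin n, a ≤ l (Fin.last (m+1)) := fun a => by
    rw [Fin.le_def]; have := a.isLt; omega
  have hbV : ∀ p : Fin (m+2), 0 < (p:ℕ) → (p:ℕ) < m+1 →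
      ∀ a b : Fin n, a ∈ V → b ∈ V → a < l p → l p < b → l p ∈ V := by
    intro p h1 h2 a b ha hb h3 h4
    have hab : π a b := π.trans (π.symm ha) hb
    have : π a (l p) := hπ.2 a (l p) b h3 h4 (hχl p h1 h2) hab
    exact π.trans ha this
  have hcpoint : ∀ (a b j : Fin n), a < j → j < b → χ j = Letter.c →
      ∃ p : Fin (m+2), 0 < (p:ℕ) ∧ (p:ℕ) < m+1 ∧ j = l p := by
    intro a b j h1 h2 hχ
    refine (hc j).mp ⟨hχ, ?_, ?_⟩
    · have := Fin.lt_def.mp h1; omega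
    · have := Fin.lt_def.mp h2; have := b.isLt; omega
  have hpiece : ∀ a b : Fin n, a ≤ b →
      (∀ p : Fin (m+2), 0 < (p:ℕ) → (p:ℕ) < m+1 → ¬(a < l p ∧ l p < b)) →
      ∃ i : Fin (m+1), l i.castSucc ≤ a ∧ b ≤ l i.succ := by
    intro a b hab hno
    set s : Finset (Fin (m+2)) := Finset.univ.filter (fun p : Fin (m+2) => l p ≤ a) with hs
    have hs0 : (0 : Fin (m+2)) ∈ s := by
      simp only [hs, Finset.mem_filter, Finset.mem_univ, true_and]
      exact hl0' a
    have hsne : s.Nonempty := ⟨0, hs0⟩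
    set p₀ := s.max' hsne with hp₀def
    have hp₀ : l p₀ ≤ a := (Finset.mem_filter.mp (s.max'_mem hsne)).2
    by_cases hcase : (p₀:ℕ) = m+1
    · have hpl : p₀ = Fin.last (m+1) := Fin.ext (by simpa using hcase)
      have h1 : l (Fin.last (m+1)) ≤ a := by rwa [hpl] at hp₀
      refine ⟨Fin.last m, le_trans (hmono.monotone ?_) h1, ?_⟩
      · rw [Fin.le_def]; simp
      · have : (Fin.last m).succ = Fin.last (m+1) := by
          apply Fin.ext; simp
        rw [this]; exact hlast' b
    · have hlt : (p₀:ℕ) < m+1 := by have := p₀.isLt; omega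
      set i : Fin (m+1) := ⟨(p₀:ℕ), hlt⟩ with hidef
      have hics : i.castSucc = p₀ := by apply Fin.ext; simp [hidef]
      have hisucc : ((i.succ : Fin (m+2)) : ℕ) = (p₀:ℕ) + 1 := by simp [hidef]
      have hsucc_not : ¬ (l i.succ ≤ a) := by
        intro hle
        have hmem : i.succ ∈ s := by
          rw [hs, Finset.mem_filter]; exact ⟨Finset.mem_univ _, hle⟩
        have := s.le_max' _ hmem
        rw [Fin.le_def, hisucc, ← hp₀def] at this
        omega
      have ha_lt : a < l i.succ := lt_of_not_ge hsucc_not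
      refine ⟨i, by rw [hics]; exact hp₀, ?_⟩
      by_contra hb
      push_neg at hb
      by_cases hin : ((i.succ : Fin (m+2)) : ℕ) < m+1
      · exact hno i.succ (by omega) hin ⟨ha_lt, hb⟩
      · have : i.succ = Fin.last (m+1) := by
          apply Fin.ext; have := (i.succ).isLt; simp only [Fin.val_last]; omega
        rw [this] at hb
        exact absurd (hlast' b) (not_le.mpr hb)
  let pc : Fin (m+1) → Set (Fin n) := pieceSet V l
  let inc : ∀ i : Fin (m+1), ↥(pc i) → ↥V := fun i u => ⟨u.1, u.2.1⟩
  let F : ∀ i : Fin (m+1), Setoid ↥V → Setoid ↥(pc i) :=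
    fun i c => Setoid.comap (inc i) c
  -- monotonicity from the pieces
  have hmonoP : ∀ (ρ : Setoid ↥V), ChiInterval (restChi V χ) ρ →
      ∀ (c' : Setoid ↥V), (∀ i, F i ρ ≤ F i c') → ρ ≤ c' := by
    intro ρ hint c' hle
    have main : ∀ (k : ℕ) (a b : ↥V), (b.1:ℕ) - (a.1:ℕ) ≤ k → a.1 ≤ b.1 → ρ a b → c' a b := by
      intro k
      induction k with
      | zero =>
        intro a b hk h1 h2
        have hab : a = b := by
          apply Subtype.ext; apply Fin.ext
          have := Fin.le_def.mp h1; omega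
        subst hab
        exact c'.refl a
      | succ k IH =>
        intro a b hk h1 h2
        by_cases hex : ∃ p : Fin (m+2), 0 < (p:ℕ) ∧ (p:ℕ) < m+1 ∧ a.1 < l p ∧ l p < b.1
        · obtain ⟨p, hp1, hp2, hp3, hp4⟩ := hex
          have hlV : l p ∈ V := hbV p hp1 hp2 a.1 b.1 a.2 b.2 hp3 hp4
          have hρaj : ρ a ⟨l p, hlV⟩ := hint a ⟨l p, hlV⟩ b hp3 hp4 (hχl p hp1 hp2) h2
          have hρjb : ρ (⟨l p, hlV⟩ : ↥V) b := ρ.trans (ρ.symm hρaj) h2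
          have hv3 := Fin.lt_def.mp hp3
          have hv4 := Fin.lt_def.mp hp4
          have h5 : c' a ⟨l p, hlV⟩ :=
            IH a ⟨l p, hlV⟩ (show ((l p : Fin n):ℕ) - ((a.1 : Fin n):ℕ) ≤ k by omega)
              (le_of_lt hp3) hρaj
          have h6 : c' (⟨l p, hlV⟩ : ↥V) b :=
            IH ⟨l p, hlV⟩ b (show ((b.1 : Fin n):ℕ) - ((l p : Fin n):ℕ) ≤ k by omega)
              (le_of_lt hp4) hρjb
          exact c'.trans h5 h6
        · have hno : ∀ p : Fin (m+2), 0 < (p:ℕ) → (p:ℕ) < m+1 → ¬(a.1 < l p ∧ l p < b.1) :=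
            fun p h1' h2' h34 => hex ⟨p, h1', h2', h34.1, h34.2⟩
          obtain ⟨i, hia, hib⟩ := hpiece a.1 b.1 h1 hno
          have hmem_a : a.1 ∈ pc i := ⟨a.2, hia, le_trans h1 hib⟩
          have hmem_b : b.1 ∈ pc i := ⟨b.2, le_trans hia h1, hib⟩
          have hfa : F i ρ ⟨a.1, hmem_a⟩ ⟨b.1, hmem_b⟩ := h2
          exact hle i hfa
    intro a b hab
    rcases le_total a.1 b.1 with h | h
    · exact main ((b.1:ℕ) - (a.1:ℕ)) a b (le_refl _) h hab
    · exact c'.symm (main ((a.1:ℕ) - (b.1:ℕ)) b a (le_refl _) h (ρ.symm hab))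
  have hmem : ∀ c : Setoid ↥V, c ∈ IBNC (restChi V χ) →
      ∀ i, F i c ∈ IBNC (restChi (pc i) χ) :=
    fun c hc' i => comap_mem_IBNC (inc i) (restChi V χ) (fun u v => Iff.rfl) hc'
  -- the glued partition: interval property
  have hglue_int : ∀ d : ∀ i, Setoid ↥(pc i), ChiInterval (restChi V χ) (glueSetoid V l d) := by
    intro d a j b h1 h2 hχj hab
    obtain ⟨p, hp1, hp2, hjl⟩ := hcpoint a.1 b.1 j.1 h1 h2 hχj
    obtain ⟨htV, hc1, hc2⟩ := glueSetoid_cross hmono j.1 ⟨p, hjl⟩ hab (le_of_lt h1) h2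
    have hje : (⟨j.1, htV⟩ : ↥V) = j := Subtype.ext rfl
    exact hje ▸ hc1
  -- the glued partition: noncrossing
  have hglue_nc : ∀ d : ∀ i, Setoid ↥(pc i), (∀ i, d i ∈ IBNC (restChi (pc i) χ)) →
      ChiNoncrossing (restChi V χ) (glueSetoid V l d) := by
    intro d hd
    have zone : ∀ q : Fin (m+2), ∀ s₁ r₁ s₂ r₂ : ↥V,
        l q ≤ s₁.1 → l q ≤ r₁.1 → l q ≤ s₂.1 → l q ≤ r₂.1 →
        chiLT (restChi V χ) s₁ r₁ → chiLT (restChi V χ) r₁ s₂ → chiLT (restChi V χ) s₂ r₂ →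
        glueSetoid V l d s₁ s₂ → glueSetoid V l d r₁ r₂ → glueSetoid V l d s₁ r₁ := by
      intro q
      induction q using Fin.reverseInduction with
      | last =>
        intro s₁ r₁ s₂ r₂ h1 h2 h3 h4 o1 o2 o3 es er
        have hsr : s₁ = r₁ := by
          apply Subtype.ext; apply Fin.ext
          have e1 := Fin.le_def.mp h1
          have e2 := Fin.le_def.mp h2
          have := (s₁.1).isLt; have := (r₁.1).isLt
          omega
        exact absurd (hsr ▸ o1) (chiLT_irrefl _ _)
      | cast q IH =>
        intro s₁ r₁ s₂ r₂ h1 h2 h3 h4 o1 o2 o3 es er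
        refine glue_nc (chiLT (restChi V χ)) (fun h h' => chiLT_trans _ h h')
          (chiLT_trichot _) (chiLT_irrefl _) (glueSetoid V l d)
          {x : ↥V | l q.castSucc ≤ x.1}
          {x : ↥V | x.1 ∈ Set.Icc (l q.castSucc) (l q.succ)}
          {x : ↥V | l q.succ ≤ x.1}
          ?_ ?_ ?_ ?_ ?_ ?_ ?_ s₁ r₁ s₂ r₂ h1 h2 h3 h4 o1 o2 o3 es er
        · -- cover
          intro y hy
          rcases le_total y.1 (l q.succ) with h | h
          · exact Or.inl ⟨hy, h⟩
          · exact Or.inr h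
        · -- convexity of H
          intro xx y z hx hz hy hlt1 hlt2
          show l q.succ ≤ y.1
          by_contra hcon
          push_neg at hcon
          rcases hlt1 with ⟨a1, a2, a3⟩ | ⟨a1, a2⟩ | ⟨a1, a2, a3⟩
          · -- y has letter ℓ or c, x < y
            have := Fin.lt_def.mp (show xx.1 < y.1 from a3)
            have hx' := Fin.le_def.mp (show l q.succ ≤ xx.1 from hx)
            have hcon' := Fin.lt_def.mp hcon
            omega
          · -- y has letter r; use y ≺ z
            rcases hlt2 with ⟨b1, b2, b3⟩ | ⟨b1, b2⟩ | ⟨b1, b2, b3⟩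
            · exact absurd b1 (not_isLC_of_r a2)
            · exact absurd b1 (not_isLC_of_r a2)
            · have := Fin.lt_def.mp (show z.1 < y.1 from b3)
              have hz' := Fin.le_def.mp (show l q.succ ≤ z.1 from hz)
              have hcon' := Fin.lt_def.mp hcon
              omega
          · rcases hlt2 with ⟨b1, b2, b3⟩ | ⟨b1, b2⟩ | ⟨b1, b2, b3⟩
            · exact absurd b1 (not_isLC_of_r a2)
            · exact absurd b1 (not_isLC_of_r a2)
            · have := Fin.lt_def.mp (show z.1 < y.1 from b3)
              have hz' := Fin.le_def.mp (show l q.succ ≤ z.1 from hz)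
              have hcon' := Fin.lt_def.mp hcon
              omega
        · -- minimality of the junction
          intro u hu1 hu2 h hh
          have hu2' : l q.succ ≤ u.1 := hu2
          have hh' : l q.succ ≤ h.1 := hh
          have hueq : u.1 = l q.succ := le_antisymm hu1.2 hu2'
          by_cases hqs : ((q.succ : Fin (m+2)) : ℕ) = m + 1
          · left
            apply Subtype.ext
            have hql : (q.succ : Fin (m+2)) = Fin.last (m+1) := Fin.ext (by simpa using hqs)
            have h1' : l (Fin.last (m+1)) ≤ h.1 := by rw [← hql]; exact hh'
            rw [hueq, hql]
            exact le_antisymm h1' (hlast' h.1)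
          · rcases eq_or_lt_of_le hh' with he | hlt'
            · left; exact Subtype.ext (hueq.trans he)
            · right
              have hχu : restChi V χ u = Letter.c := by
                show χ u.1 = Letter.c
                rw [hueq]
                exact hχl q.succ (by simp) (by have := (q.succ : Fin (m+2)).isLt; omega)
              have hult : u < h := by
                show u.1 < h.1
                rw [hueq]; exact hlt'
              rcases isLC_or_r (restChi V χ h) with hh2 | hh2
              · exact Or.inl ⟨Or.inr hχu, hh2, hult⟩
              · exact Or.inr (Or.inl ⟨Or.inr hχu, hh2⟩)
        · -- A ∩ H is a subsingleton
          intro u v hu1 hu2 hv1 hv2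
          apply Subtype.ext
          rw [le_antisymm hu1.2 hu2, le_antisymm hv1.2 hv2]
        · -- split property
          intro a b haA hbH hab
          by_cases ha' : a.1 = l q.succ
          · refine ⟨a, haA, ?_, (glueSetoid V l d).refl a⟩
            exact show l q.succ ≤ a.1 from le_of_eq ha'.symm
          · by_cases hb' : b.1 = l q.succ
            · refine ⟨b, ?_, ?_, hab⟩
              · refine ⟨?_, le_of_eq hb'⟩
                rw [hb']
                exact hmono.monotone
                  (by rw [Fin.le_def]; simp only [Fin.coe_castSucc, Fin.val_succ]; omega)
              · exact show l q.succ ≤ b.1 from le_of_eq hb'.symm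
            · have hbH' : l q.succ ≤ b.1 := hbH
              have ha2 : a.1 < l q.succ := lt_of_le_of_ne haA.2 ha'
              have hb2 : l q.succ < b.1 := lt_of_le_of_ne hbH' (Ne.symm hb')
              obtain ⟨htV, hc1, hc2⟩ :=
                glueSetoid_cross hmono (l q.succ) ⟨q.succ, rfl⟩ hab (le_of_lt ha2) hb2
              refine ⟨⟨l q.succ, htV⟩, ?_, ?_, hc1⟩
              · refine ⟨?_, le_refl _⟩
                exact hmono.monotone
                  (by rw [Fin.le_def]; simp only [Fin.coe_castSucc, Fin.val_succ]; omega)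
              · exact show l q.succ ≤ l q.succ from le_refl _
        · -- noncrossing inside the piece
          intro t₁ w₁ t₂ w₂ ht₁ hw₁ ht₂ hw₂ p1 p2 p3 ees eer
          have m1 : t₁.1 ∈ pc q := ⟨t₁.2, ht₁⟩
          have m2 : w₁.1 ∈ pc q := ⟨w₁.2, hw₁⟩
          have m3 : t₂.1 ∈ pc q := ⟨t₂.2, ht₂⟩
          have m4 : w₂.1 ∈ pc q := ⟨w₂.2, hw₂⟩
          have tr : ∀ (u v : ↥V) (hu : u.1 ∈ pc q) (hv : v.1 ∈ pc q),
              chiLT (restChi V χ) u v →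
              chiLT (restChi (pc q) χ) ⟨u.1, hu⟩ ⟨v.1, hv⟩ := by
            rintro u v hu hv (⟨a1, a2, a3⟩ | ⟨a1, a2⟩ | ⟨a1, a2, a3⟩)
            · exact Or.inl ⟨a1, a2, a3⟩
            · exact Or.inr (Or.inl ⟨a1, a2⟩)
            · exact Or.inr (Or.inr ⟨a1, a2, a3⟩)
          have hds : d q ⟨t₁.1, m1⟩ ⟨t₂.1, m3⟩ := glueSetoid_squeeze hmono m1 m3 ees
          have hdr : d q ⟨w₁.1, m2⟩ ⟨w₂.1, m4⟩ := glueSetoid_squeeze hmono m2 m4 eer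
          have := (hd q).1 ⟨t₁.1, m1⟩ ⟨w₁.1, m2⟩ ⟨t₂.1, m3⟩ ⟨w₂.1, m4⟩
            (tr t₁ w₁ m1 m2 p1) (tr w₁ t₂ m2 m3 p2) (tr t₂ w₂ m3 m4 p3) hds hdr
          exact glueSetoid_of_rel ⟨q, m1, m2, this⟩
        · -- noncrossing in the remaining zone: induction hypothesis
          intro t₁ w₁ t₂ w₂ ht₁ hw₁ ht₂ hw₂ p1 p2 p3 ees eer
          exact IH t₁ w₁ t₂ w₂ ht₁ hw₁ ht₂ hw₂ p1 p2 p3 ees eer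
    intro s₁ r₁ s₂ r₂ o1 o2 o3 es er
    exact zone 0 s₁ r₁ s₂ r₂ (hl0' _) (hl0' _) (hl0' _) (hl0' _) o1 o2 o3 es er
  -- restriction of the glued partition recovers the pieces
  have hFi : ∀ (d : ∀ i, Setoid ↥(pc i)) (i : Fin (m+1)), F i (glueSetoid V l d) = d i := by
    intro d i
    apply Setoid.ext; intro u v
    constructor
    · intro h
      exact glueSetoid_squeeze hmono u.2 v.2 h
    · intro h
      exact glueSetoid_of_rel ⟨i, u.2, v.2, h⟩
  have final := key (IBNC (restChi V χ)) (fun i => IBNC (restChi (pc i) χ)) F muV mui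
      hmuV hmui (top_mem_IBNC _) (fun i => top_mem_IBNC _)
      (fun i => Setoid.ext fun u v => Iff.rfl)
      (fun a ha i => hmem a ha i)
      (fun a ha b hb => ⟨fun hab i u v h => hab h, fun h => hmonoP a ha.2 b h⟩)
      (fun a ha d hd' =>
        ⟨glueSetoid V l d,
          ⟨hglue_nc d (fun i => (hd' i).1), hglue_int d⟩,
          hmonoP a ha.2 (glueSetoid V l d) (fun i => (hFi d i).symm ▸ (hd' i).2),
          fun i => hFi d i⟩)
      (restrict V σ)
      (comap_mem_IBNC Subtype.val χ (fun u v => Iff.rfl) hσ)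
  exact final


end FFB
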